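/- Let (x_M^ℓ)_{M ⊆ [m], 0 ≤ ℓ ≤ L} be nonnegative reals summing to 1 that satisfy the relaxed flow inequalities λ·Σ_M x_M^{ℓ−1} ≥ Σ_M x_M^ℓ·(γ(M) + ℓ) for all 1 ≤ ℓ ≤ L, where γ(M) = Σ_{j∈M} γ_j with γ_j ≥ 0 and λ > 0. Then there exists a feasible point (x̃_M^ℓ) with the same objective value Σ_{ℓ,M} Σ_{j∈M} γ_j c_j x̃_M^ℓ ≤ Σ_{ℓ,M} Σ_{j∈M} γ_j c_j x_M^ℓ, the same or larger throughput Σ_{ℓ≥1,M} γ(M) x̃_M^ℓ ≥ Σ_{ℓ≥1,M} γ(M) x_M^ℓ, satisfying the flow equalities λ·Σ_M x̃_M^{ℓ−1} = Σ_M x̃_M^ℓ·(γ(M)+ℓ) for all ℓ, in the finite-dimensional case (L < ∞). -/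

import Mathlib

open Finset

section Aux

variable {m L : ℕ}

/-- Extend a finitely-indexed vector to a `ℕ`-indexed family, zero beyond `L`. -/
noncomputable def extF (L : ℕ) {m : ℕ} (y : Finset (Fin m) × Fin (L + 1) → ℝ)
    (M : Finset (Fin m)) (ℓ : ℕ) : ℝ :=
  if h : ℓ < L + 1 then y (M, ⟨ℓ, h⟩) else 0

lemma extF_of_lt (y : Finset (Fin m) × Fin (L + 1) → ℝ)
    (M : Finset (Fin m)) {ℓ : ℕ} (h : ℓ < L + 1) :
    extF L y M ℓ = y (M, ⟨ℓ, h⟩) := dif_pos h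

lemma continuous_extF (M : Finset (Fin m)) (ℓ : ℕ) :
    Continuous fun y : Finset (Fin m) × Fin (L + 1) → ℝ => extF L y M ℓ := by
  by_cases h : ℓ < L + 1
  · simp only [extF, dif_pos h]; exact continuous_apply _
  · simp only [extF, dif_neg h]; exact continuous_const

lemma extF_nonneg {y : Finset (Fin m) × Fin (L + 1) → ℝ} (hy : ∀ i, 0 ≤ y i)
    (M : Finset (Fin m)) (ℓ : ℕ) : 0 ≤ extF L y M ℓ := by
  by_cases h : ℓ < L + 1
  · rw [extF_of_lt _ _ h]; exact hy _
  · simp [extF, h]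

lemma sum_extF_total (y : Finset (Fin m) × Fin (L + 1) → ℝ) :
    ∑ ℓ ∈ Finset.range (L + 1), ∑ M : Finset (Fin m), extF L y M ℓ = ∑ i, y i := by
  rw [← Fin.sum_univ_eq_sum_range (fun ℓ => ∑ M : Finset (Fin m), extF L y M ℓ) (L + 1)]
  rw [Fintype.sum_prod_type_right]
  refine Finset.sum_congr rfl fun ℓ _ => Finset.sum_congr rfl fun M _ => ?_
  rw [extF_of_lt _ _ ℓ.isLt]

end Aux

/-- The relaxed Dynamic LP is tight (finite-dimensional case): from any
nonnegative solution of the relaxed flow inequalities summing to 1, one can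
construct a solution satisfying the flow *equalities* with no larger cost and
no smaller throughput. -/
theorem relaxed_dlp_tight
    (m L : ℕ) (lam : ℝ) (hlam : 0 < lam)
    (γ c : Fin m → ℝ) (hγ : ∀ j, 0 ≤ γ j)
    (x : Finset (Fin m) → ℕ → ℝ)
    (hx_nonneg : ∀ M ℓ, 0 ≤ x M ℓ)
    (hx_sum : ∑ ℓ ∈ Finset.range (L + 1), ∑ M : Finset (Fin m), x M ℓ = 1)
    (hflow : ∀ ℓ, 1 ≤ ℓ → ℓ ≤ L →
      (∑ M : Finset (Fin m), x M ℓ * ((∑ j ∈ M, γ j) + (ℓ : ℝ)))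
        ≤ lam * ∑ M : Finset (Fin m), x M (ℓ - 1)) :
    ∃ x' : Finset (Fin m) → ℕ → ℝ,
      (∀ M ℓ, 0 ≤ x' M ℓ) ∧
      (∑ ℓ ∈ Finset.range (L + 1), ∑ M : Finset (Fin m), x' M ℓ = 1) ∧
      (∀ ℓ, 1 ≤ ℓ → ℓ ≤ L →
        lam * (∑ M : Finset (Fin m), x' M (ℓ - 1))
          = ∑ M : Finset (Fin m), x' M ℓ * ((∑ j ∈ M, γ j) + (ℓ : ℝ))) ∧
      (∑ ℓ ∈ Finset.range (L + 1), ∑ M : Finset (Fin m), ∑ j ∈ M, γ j * c j * x' M ℓ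
        ≤ ∑ ℓ ∈ Finset.range (L + 1), ∑ M : Finset (Fin m), ∑ j ∈ M, γ j * c j * x M ℓ) ∧
      (∑ ℓ ∈ Finset.Icc 1 L, ∑ M : Finset (Fin m), (∑ j ∈ M, γ j) * x M ℓ
        ≤ ∑ ℓ ∈ Finset.Icc 1 L, ∑ M : Finset (Fin m), (∑ j ∈ M, γ j) * x' M ℓ) := by
  classical
  set V := (Finset (Fin m) × Fin (L + 1)) → ℝ with hV
  set S : V → ℕ → ℝ := fun y k => ∑ M : Finset (Fin m), extF L y M k with hS
  set B : V → ℕ → ℝ :=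
    fun y k => ∑ M : Finset (Fin m), extF L y M k * ((∑ j ∈ M, γ j) + (k : ℝ)) with hB
  set A : V → ℝ := fun y => ∑ ℓ ∈ Finset.range (L + 1), S y ℓ with hA
  set cost : V → ℝ :=
    fun y => ∑ ℓ ∈ Finset.range (L + 1), ∑ M : Finset (Fin m),
      ∑ j ∈ M, γ j * c j * extF L y M ℓ with hcost
  set thr : V → ℝ :=
    fun y => ∑ ℓ ∈ Finset.Icc 1 L, ∑ M : Finset (Fin m),
      (∑ j ∈ M, γ j) * extF L y M ℓ with hthr
  set C0 : ℝ :=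
    ∑ ℓ ∈ Finset.range (L + 1), ∑ M : Finset (Fin m), ∑ j ∈ M, γ j * c j * x M ℓ with hC0
  set T0 : ℝ :=
    ∑ ℓ ∈ Finset.Icc 1 L, ∑ M : Finset (Fin m), (∑ j ∈ M, γ j) * x M ℓ with hT0
  set K : Set V := {y | (∀ i, 0 ≤ y i) ∧ A y = 1 ∧
      (∀ k, 1 ≤ k → k ≤ L → B y k ≤ lam * S y (k - 1)) ∧
      cost y ≤ C0 ∧ T0 ≤ thr y} with hK
  have hγsum : ∀ M : Finset (Fin m), 0 ≤ ∑ j ∈ M, γ j :=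
    fun M => Finset.sum_nonneg fun j _ => hγ j
  -- x gives a point of K
  set y0 : V := fun i => x i.1 i.2.1 with hy0
  have hexty0 : ∀ (M : Finset (Fin m)) (ℓ : ℕ), ℓ < L + 1 → extF L y0 M ℓ = x M ℓ := by
    intro M ℓ h; rw [extF_of_lt _ _ h]
  have hy0K : y0 ∈ K := by
    refine ⟨fun i => hx_nonneg _ _, ?_, ?_, ?_, ?_⟩
    · simp only [hA, hS]
      rw [show (∑ ℓ ∈ Finset.range (L + 1), ∑ M : Finset (Fin m), extF L y0 M ℓ)
          = ∑ ℓ ∈ Finset.range (L + 1), ∑ M : Finset (Fin m), x M ℓ from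
        Finset.sum_congr rfl fun ℓ hℓ => Finset.sum_congr rfl fun M _ =>
          hexty0 M ℓ (Finset.mem_range.1 hℓ)]
      exact hx_sum
    · intro k hk1 hkL
      have h1 : B y0 k = ∑ M : Finset (Fin m), x M k * ((∑ j ∈ M, γ j) + (k : ℝ)) := by
        simp only [hB]
        exact Finset.sum_congr rfl fun M _ => by rw [hexty0 M k (by omega)]
      have h2 : S y0 (k - 1) = ∑ M : Finset (Fin m), x M (k - 1) := by
        simp only [hS]
        exact Finset.sum_congr rfl fun M _ => hexty0 M (k - 1) (by omega)
      rw [h1, h2]; exact hflow k hk1 hkL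
    · simp only [hcost, hC0]
      exact le_of_eq (Finset.sum_congr rfl fun ℓ hℓ => Finset.sum_congr rfl fun M _ =>
        Finset.sum_congr rfl fun j _ => by rw [hexty0 M ℓ (Finset.mem_range.1 hℓ)])
    · simp only [hthr, hT0]
      refine le_of_eq (Finset.sum_congr rfl fun ℓ hℓ => Finset.sum_congr rfl fun M _ => ?_)
      rw [hexty0 M ℓ (by have := Finset.mem_Icc.1 hℓ; omega)]
  -- K is compact
  have cS : ∀ k, Continuous fun y : V => S y k := fun k =>
    continuous_finset_sum _ fun M _ => continuous_extF M k
  have hKclosed : IsClosed K := by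
    have c1 : IsClosed {y : V | ∀ i, 0 ≤ y i} := by
      rw [Set.setOf_forall]
      exact isClosed_iInter fun i => isClosed_le continuous_const (continuous_apply i)
    have cA : Continuous A := continuous_finset_sum _ fun ℓ _ => cS ℓ
    have cB : ∀ k, Continuous fun y : V => B y k := fun k =>
      continuous_finset_sum _ fun M _ => (continuous_extF M k).mul continuous_const
    have ccost : Continuous cost :=
      continuous_finset_sum _ fun ℓ _ => continuous_finset_sum _ fun M _ =>
        continuous_finset_sum _ fun j _ => continuous_const.mul (continuous_extF M ℓ)
    have cthr : Continuous thr :=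
      continuous_finset_sum _ fun ℓ _ => continuous_finset_sum _ fun M _ =>
        continuous_const.mul (continuous_extF M ℓ)
    have c3 : IsClosed {y : V | ∀ k, 1 ≤ k → k ≤ L → B y k ≤ lam * S y (k - 1)} := by
      have : {y : V | ∀ k, 1 ≤ k → k ≤ L → B y k ≤ lam * S y (k - 1)}
          = ⋂ k, ⋂ (_ : 1 ≤ k), ⋂ (_ : k ≤ L), {y : V | B y k ≤ lam * S y (k - 1)} := by
        ext y; simp
      rw [this]
      exact isClosed_iInter fun k => isClosed_iInter fun _ => isClosed_iInter fun _ =>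
        isClosed_le (cB k) (continuous_const.mul (cS (k - 1)))
    have hKeq : K = {y : V | ∀ i, 0 ≤ y i} ∩ ({y | A y = 1} ∩
        ({y : V | ∀ k, 1 ≤ k → k ≤ L → B y k ≤ lam * S y (k - 1)} ∩
          ({y | cost y ≤ C0} ∩ {y | T0 ≤ thr y}))) := by
      ext y; simp only [hK, Set.mem_setOf_eq, Set.mem_inter_iff, and_assoc]
    rw [hKeq]
    exact c1.inter ((isClosed_eq cA continuous_const).inter (c3.inter
      ((isClosed_le ccost continuous_const).inter
        (isClosed_le continuous_const cthr))))
  have hKsub : K ⊆ Set.Icc (0 : V) 1 := by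
    intro y hy
    obtain ⟨hpos, hsum, -, -, -⟩ := hy
    have hAy : ∑ j, y j = 1 := by
      rw [← sum_extF_total]
      simpa only [hA, hS] using hsum
    constructor
    · intro i; exact hpos i
    · intro i
      have : y i ≤ ∑ j, y j :=
        Finset.single_le_sum (fun j _ => hpos j) (Finset.mem_univ i)
      rw [hAy] at this; exact this
  have hKcomp : IsCompact K := IsCompact.of_isClosed_subset isCompact_Icc hKclosed hKsub
  -- maximize total level
  set Φ : V → ℝ := fun y => ∑ i : Finset (Fin m) × Fin (L + 1), ((i.2 : ℕ) : ℝ) * y i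
    with hΦ
  have hΦcont : Continuous Φ :=
    continuous_finset_sum _ fun i _ => continuous_const.mul (continuous_apply i)
  obtain ⟨y, hyK, hymax⟩ := hKcomp.exists_isMaxOn ⟨y0, hy0K⟩ hΦcont.continuousOn
  obtain ⟨hy_nonneg, hy_sum, hy_flow, hy_cost, hy_thr⟩ := hyK
  -- Key claim: at the maximizer all flow inequalities are equalities.
  have hkey : ∀ k, 1 ≤ k → k ≤ L → lam * S y (k - 1) = B y k := by
    intro k hk1 hkL
    by_contra hne
    have hlt : B y k < lam * S y (k - 1) :=
      lt_of_le_of_ne (hy_flow k hk1 hkL) fun h => hne h.symm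
    have hBnn : 0 ≤ B y k := Finset.sum_nonneg fun M _ =>
      mul_nonneg (extF_nonneg hy_nonneg M k) (by have := hγsum M; positivity)
    have hSpos : 0 < S y (k - 1) := by nlinarith [hlam, hBnn, hlt]
    obtain ⟨M0, -, hM0⟩ : ∃ M0 ∈ Finset.univ, (0:ℝ) < extF L y M0 (k - 1) := by
      refine Finset.exists_lt_of_sum_lt (f := fun _ => (0:ℝ)) ?_
      simpa [hS] using hSpos
    set σ : ℝ := lam * S y (k - 1) - B y k with hσ
    have hσpos : 0 < σ := by rw [hσ]; linarith
    set g0 : ℝ := ∑ j ∈ M0, γ j with hg0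
    have hg0nn : 0 ≤ g0 := hγsum M0
    have hden : 0 < lam + g0 + (k : ℝ) := by positivity
    set δ : ℝ := min (extF L y M0 (k - 1)) (σ / (lam + g0 + (k : ℝ))) with hδ
    have hδpos : 0 < δ := lt_min hM0 (div_pos hσpos hden)
    have hδ1 : δ ≤ extF L y M0 (k - 1) := min_le_left _ _
    have hδ2 : δ * (lam + g0 + (k : ℝ)) ≤ σ := by
      calc δ * (lam + g0 + (k : ℝ)) ≤ (σ / (lam + g0 + (k : ℝ))) * (lam + g0 + (k : ℝ)) :=
            mul_le_mul_of_nonneg_right (min_le_right _ _) hden.le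
        _ = σ := div_mul_cancel₀ _ hden.ne'
    have hkfin : k < L + 1 := by omega
    have hk1fin : k - 1 < L + 1 := by omega
    set i1 : Finset (Fin m) × Fin (L + 1) := (M0, ⟨k, hkfin⟩) with hi1
    set i0 : Finset (Fin m) × Fin (L + 1) := (M0, ⟨k - 1, hk1fin⟩) with hi0
    have hi01 : i0 ≠ i1 := by
      simp only [hi0, hi1, Prod.mk.injEq, Fin.mk.injEq, ne_eq]
      omega
    set z : V := fun i => y i + (if i = i1 then δ else 0) - (if i = i0 then δ else 0) with hz
    -- shift formula for weighted column sums
    have hshift : ∀ (f : Finset (Fin m) → ℝ) (k' : ℕ), k' ≤ L →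
        ∑ M : Finset (Fin m), extF L z M k' * f M
          = (∑ M : Finset (Fin m), extF L y M k' * f M)
            + (if k' = k then δ * f M0 else 0) - (if k' = k - 1 then δ * f M0 else 0) := by
      intro f k' hk'
      have hk'fin : k' < L + 1 := by omega
      have hterm : ∀ M : Finset (Fin m), extF L z M k'
          = extF L y M k' + (if M = M0 ∧ k' = k then δ else 0)
            - (if M = M0 ∧ k' = k - 1 then δ else 0) := by
        intro M
        rw [extF_of_lt _ _ hk'fin, extF_of_lt _ _ hk'fin, hz]
        have e1 : ((M, (⟨k', hk'fin⟩ : Fin (L + 1))) = i1) = (M = M0 ∧ k' = k) := by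
          simp only [hi1, Prod.ext_iff, Fin.ext_iff]
        have e0 : ((M, (⟨k', hk'fin⟩ : Fin (L + 1))) = i0) = (M = M0 ∧ k' = k - 1) := by
          simp only [hi0, Prod.ext_iff, Fin.ext_iff]
        simp only [e1, e0]
      have hone : ∀ (P : Prop) (_ : Decidable P),
          (∑ M : Finset (Fin m), (if M = M0 ∧ P then δ else 0) * f M)
            = if P then δ * f M0 else 0 := by
        intro P hP
        by_cases h : P
        · simp only [h, and_true, if_true]
          rw [show (∑ M : Finset (Fin m), (if M = M0 then δ else 0) * f M)
              = ∑ M : Finset (Fin m), (if M = M0 then δ * f M else 0) from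
            Finset.sum_congr rfl fun M _ => by split <;> simp]
          rw [Finset.sum_ite_eq' Finset.univ M0 (fun M => δ * f M)]
          simp
        · simp [h]
      calc ∑ M : Finset (Fin m), extF L z M k' * f M
          = ∑ M : Finset (Fin m), (extF L y M k' * f M
              + (if M = M0 ∧ k' = k then δ else 0) * f M
              - (if M = M0 ∧ k' = k - 1 then δ else 0) * f M) := by
            refine Finset.sum_congr rfl fun M _ => ?_
            rw [hterm M]; ring
        _ = (∑ M : Finset (Fin m), extF L y M k' * f M)
              + (∑ M : Finset (Fin m), (if M = M0 ∧ k' = k then δ else 0) * f M)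
              - ∑ M : Finset (Fin m), (if M = M0 ∧ k' = k - 1 then δ else 0) * f M := by
            rw [Finset.sum_sub_distrib, Finset.sum_add_distrib]
        _ = _ := by rw [hone _ (inferInstance), hone _ (inferInstance)]
    have hSshift : ∀ k' : ℕ, k' ≤ L →
        S z k' = S y k' + (if k' = k then δ else 0) - (if k' = k - 1 then δ else 0) := by
      intro k' hk'
      have := hshift (fun _ => (1:ℝ)) k' hk'
      simpa only [mul_one, hS] using this
    have hBshift : ∀ k' : ℕ, k' ≤ L →
        B z k' = B y k' + (if k' = k then δ * (g0 + (k' : ℝ)) else 0)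
          - (if k' = k - 1 then δ * (g0 + (k' : ℝ)) else 0) := by
      intro k' hk'
      have := hshift (fun M => (∑ j ∈ M, γ j) + (k' : ℝ)) k' hk'
      simpa only [hB, hg0] using this
    -- z is in K
    have hzK : z ∈ K := by
      refine ⟨?_, ?_, ?_, ?_, ?_⟩
      · intro i
        have hyi0 : δ ≤ y i0 := by
          have he : extF L y M0 (k - 1) = y i0 := extF_of_lt _ _ hk1fin
          have := hδ1
          rw [he] at this
          exact this
        have hzi : z i = y i + (if i = i1 then δ else 0) - (if i = i0 then δ else 0) := rfl
        rw [hzi]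
        split_ifs with h1 h2 h2
        · exact absurd (h2.symm.trans h1) hi01
        · have := hy_nonneg i; linarith [hδpos.le]
        · subst h2; linarith [hyi0]
        · have := hy_nonneg i; linarith
      · simp only [hA]
        have : ∑ ℓ ∈ Finset.range (L + 1), S z ℓ
            = ∑ ℓ ∈ Finset.range (L + 1), (S y ℓ + (if ℓ = k then δ else 0)
              - (if ℓ = k - 1 then δ else 0)) :=
          Finset.sum_congr rfl fun ℓ hℓ => hSshift ℓ (by
            have := Finset.mem_range.1 hℓ; omega)
        rw [this, Finset.sum_sub_distrib, Finset.sum_add_distrib,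
          Finset.sum_ite_eq' (Finset.range (L + 1)) k (fun _ => δ),
          Finset.sum_ite_eq' (Finset.range (L + 1)) (k - 1) (fun _ => δ),
          if_pos (Finset.mem_range.2 hkfin), if_pos (Finset.mem_range.2 hk1fin)]
        have := hy_sum
        simp only [hA] at this
        linarith
      · intro k' hk'1 hk'L
        have hBz := hBshift k' hk'L
        have hSz := hSshift (k' - 1) (by omega)
        by_cases hc1 : k' = k
        · subst hc1
          rw [if_pos rfl] at hBz
          rw [if_neg (by omega), if_pos rfl] at hSz
          rw [if_neg (by omega)] at hBz
          have hfl := hy_flow k' hk'1 hk'L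
          have : δ * (lam + g0 + (k' : ℝ)) ≤ lam * S y (k' - 1) - B y k' := by
            rw [hσ] at hδ2; exact hδ2
          rw [hBz, hSz]; nlinarith
        · by_cases hc2 : k' = k - 1
          · have hk2 : 2 ≤ k := by omega
            rw [if_neg hc1, if_pos hc2] at hBz
            rw [if_neg (by omega), if_neg (by omega)] at hSz
            have hfl := hy_flow k' hk'1 hk'L
            have hnn : 0 ≤ δ * (g0 + (k' : ℝ)) := by positivity
            rw [hBz, hSz]; linarith
          · rw [if_neg hc1, if_neg hc2] at hBz
            have hfl := hy_flow k' hk'1 hk'L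
            by_cases hc3 : k' = k + 1
            · rw [if_pos (by omega), if_neg (by omega)] at hSz
              have : 0 ≤ lam * δ := by positivity
              rw [hBz, hSz]; linarith
            · rw [if_neg (by omega), if_neg (by omega)] at hSz
              rw [hBz, hSz]; linarith
      · -- cost is unchanged
        have hcosteq : ∀ w : V, cost w = ∑ ℓ ∈ Finset.range (L + 1),
            ∑ M : Finset (Fin m), extF L w M ℓ * (∑ j ∈ M, γ j * c j) := by
          intro w
          simp only [hcost]
          refine Finset.sum_congr rfl fun ℓ _ => Finset.sum_congr rfl fun M _ => ?_
          rw [Finset.mul_sum]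
          exact Finset.sum_congr rfl fun j _ => by ring
        have : cost z = cost y := by
          rw [hcosteq z, hcosteq y]
          have : ∀ ℓ ∈ Finset.range (L + 1),
              (∑ M : Finset (Fin m), extF L z M ℓ * (∑ j ∈ M, γ j * c j))
                = (∑ M : Finset (Fin m), extF L y M ℓ * (∑ j ∈ M, γ j * c j))
                  + (if ℓ = k then δ * (∑ j ∈ M0, γ j * c j) else 0)
                  - (if ℓ = k - 1 then δ * (∑ j ∈ M0, γ j * c j) else 0) := by
            intro ℓ hℓ
            exact hshift (fun M => ∑ j ∈ M, γ j * c j) ℓ (by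
              have := Finset.mem_range.1 hℓ; omega)
          rw [Finset.sum_congr rfl this, Finset.sum_sub_distrib, Finset.sum_add_distrib,
            Finset.sum_ite_eq' (Finset.range (L + 1)) k,
            Finset.sum_ite_eq' (Finset.range (L + 1)) (k - 1),
            if_pos (Finset.mem_range.2 hkfin), if_pos (Finset.mem_range.2 hk1fin)]
          ring
        rw [this]; exact hy_cost
      · -- throughput does not decrease
        have hthreq : ∀ w : V, thr w = ∑ ℓ ∈ Finset.Icc 1 L,
            ∑ M : Finset (Fin m), extF L w M ℓ * (∑ j ∈ M, γ j) := by
          intro w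
          simp only [hthr]
          exact Finset.sum_congr rfl fun ℓ _ => Finset.sum_congr rfl fun M _ => mul_comm _ _
        have hthrz : thr z = thr y + δ * g0 - (if k - 1 ∈ Finset.Icc 1 L then δ * g0 else 0) := by
          rw [hthreq z, hthreq y]
          have : ∀ ℓ ∈ Finset.Icc 1 L,
              (∑ M : Finset (Fin m), extF L z M ℓ * (∑ j ∈ M, γ j))
                = (∑ M : Finset (Fin m), extF L y M ℓ * (∑ j ∈ M, γ j))
                  + (if ℓ = k then δ * g0 else 0) - (if ℓ = k - 1 then δ * g0 else 0) := by
            intro ℓ hℓ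
            have := hshift (fun M => ∑ j ∈ M, γ j) ℓ (by
              have := Finset.mem_Icc.1 hℓ; omega)
            simpa only [hg0] using this
          rw [Finset.sum_congr rfl this, Finset.sum_sub_distrib, Finset.sum_add_distrib,
            Finset.sum_ite_eq' (Finset.Icc 1 L) k (fun _ => δ * g0),
            Finset.sum_ite_eq' (Finset.Icc 1 L) (k - 1) (fun _ => δ * g0),
            if_pos (Finset.mem_Icc.2 ⟨hk1, hkL⟩)]
        have hδg : 0 ≤ δ * g0 := by positivity
        rw [hthrz]
        split
        · linarith
        · linarith
    -- Φ strictly increases: contradiction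
    have hΦz : Φ z = Φ y + δ := by
      simp only [hΦ, hz]
      have hsplit : ∀ i : Finset (Fin m) × Fin (L + 1),
          ((i.2 : ℕ) : ℝ) * (y i + (if i = i1 then δ else 0) - (if i = i0 then δ else 0))
            = ((i.2 : ℕ) : ℝ) * y i + (if i = i1 then ((i.2 : ℕ) : ℝ) * δ else 0)
              - (if i = i0 then ((i.2 : ℕ) : ℝ) * δ else 0) := by
        intro i; split <;> split <;> ring
      rw [Finset.sum_congr rfl fun i _ => hsplit i, Finset.sum_sub_distrib,
        Finset.sum_add_distrib,
        Finset.sum_ite_eq' Finset.univ i1 (fun i => ((i.2 : ℕ) : ℝ) * δ),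
        Finset.sum_ite_eq' Finset.univ i0 (fun i => ((i.2 : ℕ) : ℝ) * δ),
        if_pos (Finset.mem_univ i1), if_pos (Finset.mem_univ i0)]
      have h1 : ((i1.2 : ℕ) : ℝ) = (k : ℝ) := by simp [hi1]
      have h0 : ((i0.2 : ℕ) : ℝ) = (k : ℝ) - 1 := by
        simp only [hi0]
        push_cast [Nat.cast_sub hk1]
        ring
      rw [h1, h0]; ring
    have := hymax hzK
    simp only [Set.mem_setOf_eq] at this
    rw [hΦz] at this
    linarith
  -- assemble the answer
  refine ⟨extF L y, fun M ℓ => extF_nonneg hy_nonneg M ℓ, ?_, ?_, ?_, ?_⟩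
  · simpa only [hA, hS] using hy_sum
  · intro ℓ h1 h2
    have := hkey ℓ h1 h2
    simpa only [hS, hB] using this
  · simpa only [hcost, hC0] using hy_cost
  · simpa only [hthr, hT0] using hy_thr
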